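/- Let $f : [0,\tau] \to \mathbb{R}$ be continuous, let $w : [0,\tau] \to (0,\infty)$ be continuous, and let $\hat\lambda$ denote the minimizer over nondecreasing functions of $\int_0^\tau (\lambda - f)^2 w\,dx$ (the weighted isotonic projection of $f$). If $f$ is nondecreasing on a subinterval $[\ell, M] \subset [0, \tau]$ and there exist tangent-line extensions of $\int_0^\cdot f\,dW$ (where $W(t) = \int_0^t w$) at $\ell$ and $M$ that lie below the graph of $t \mapsto \int_0^t f\,dW$ on $[0,\ell]$ and $[M, \tau]$ respectively, then $\hat\lambda = f$ on $[\ell, M]$. -/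

import Mathlib

open MeasureTheory

lemma bdd_meas_intInt {g : ℝ → ℝ} {D a b : ℝ} (hg : Measurable g)
    (hD : ∀ x, |g x| ≤ D) : IntervalIntegrable g volume a b := by
  constructor <;>
  · refine Integrable.mono' (integrable_const D) hg.aestronglyMeasurable ?_
    filter_upwards with x using hD x

lemma abs_mul3_le {a b c A B C' : ℝ} (ha : |a| ≤ A) (hb : |b| ≤ B) (hc : |c| ≤ C') :
    |a * b * c| ≤ A * B * C' := by
  rw [abs_mul, abs_mul]
  have h0a := abs_nonneg a
  have h0b := abs_nonneg b
  have h0c := abs_nonneg c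
  exact mul_le_mul (mul_le_mul ha hb h0b (h0a.trans ha)) hc h0c
    (mul_nonneg (h0a.trans ha) (h0b.trans hb))


lemma key_left {α β C D : ℝ} (hαβ : α ≤ β) {ρ ψ : ℝ → ℝ}
    (hρm : Measurable ρ) (hρD : ∀ x, |ρ x| ≤ D)
    (hψ : Monotone ψ) (hψ0 : ∀ t, 0 ≤ ψ t) (hψC : ∀ t, ψ t ≤ C)
    (htail : ∀ t ∈ Set.Icc α β, 0 ≤ ∫ u in t..β, ρ u) :
    0 ≤ ∫ u in α..β, ψ u * ρ u := by
  have hD0 : 0 ≤ D := le_trans (abs_nonneg _) (hρD α)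
  rw [intervalIntegral.integral_of_le hαβ]
  set μ := volume.restrict (Set.Ioc α β) with hμ
  set ν := volume.restrict (Set.Ioc 0 C) with hν
  haveI : IsFiniteMeasure μ := by
    constructor
    rw [hμ, Measure.restrict_apply_univ]
    exact measure_Ioc_lt_top
  haveI : IsFiniteMeasure ν := by
    constructor
    rw [hν, Measure.restrict_apply_univ]
    exact measure_Ioc_lt_top
  set G : ℝ → ℝ → ℝ := fun u s => if s < ψ u then ρ u else 0 with hG
  have hset : MeasurableSet {p : ℝ × ℝ | p.2 < ψ p.1} :=
    measurableSet_lt measurable_snd (hψ.measurable.comp measurable_fst)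
  have hGm : Measurable (Function.uncurry G) :=
    Measurable.ite hset (hρm.comp measurable_fst) measurable_const
  have hGi : Integrable (Function.uncurry G) (μ.prod ν) := by
    refine Integrable.mono' (integrable_const D) hGm.aestronglyMeasurable ?_
    filter_upwards with p
    simp only [Function.uncurry, hG]
    split
    · exact hρD _
    · simpa using hD0
  have hinner : ∀ u, ∫ s, G u s ∂ν = ψ u * ρ u := by
    intro u
    have h1 : ∀ s, G u s = (Set.Iio (ψ u)).indicator (fun _ => ρ u) s := by
      intro s
      simp [hG, Set.indicator_apply, Set.mem_Iio]
    simp_rw [h1]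
    rw [integral_indicator_const _ measurableSet_Iio]
    rw [hν, measureReal_def, Measure.restrict_apply measurableSet_Iio]
    have h2 : Set.Iio (ψ u) ∩ Set.Ioc 0 C = Set.Ioo 0 (ψ u) := by
      ext s
      simp only [Set.mem_inter_iff, Set.mem_Iio, Set.mem_Ioc, Set.mem_Ioo]
      constructor
      · rintro ⟨h, h', _⟩; exact ⟨h', h⟩
      · rintro ⟨h, h'⟩; exact ⟨h', h, le_trans h'.le (hψC u)⟩
    rw [h2, Real.volume_Ioo]
    rw [ENNReal.toReal_ofReal (by simpa using hψ0 u)]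
    simp [mul_comm]
  have hswap : ∫ u, ψ u * ρ u ∂μ = ∫ s, ∫ u, G u s ∂μ ∂ν := by
    rw [← integral_integral_swap hGi]
    exact integral_congr_ae (Filter.Eventually.of_forall fun u => (hinner u).symm)
  rw [hswap]
  refine integral_nonneg fun s => ?_
  -- inner integral nonneg for each s
  have hU : MeasurableSet {u : ℝ | s < ψ u} :=
    measurableSet_lt measurable_const hψ.measurable
  have h3 : ∀ u, G u s = ({u : ℝ | s < ψ u}).indicator ρ u := by
    intro u
    simp [hG, Set.indicator_apply]
  simp_rw [h3]
  rw [integral_indicator hU, hμ, Measure.restrict_restrict hU]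
  by_cases hne : ∃ u ∈ Set.Icc α β, s < ψ u
  · obtain ⟨v, hv, hsv⟩ := hne
    set U := {u ∈ Set.Icc α β | s < ψ u} with hUdef
    have hUne : U.Nonempty := ⟨v, hv, hsv⟩
    have hUbdd : BddBelow U := ⟨α, fun x hx => hx.1.1⟩
    set a₀ := sInf U with ha₀
    have ha₀α : α ≤ a₀ := le_csInf hUne fun x hx => hx.1.1
    have ha₀β : a₀ ≤ β := le_trans (csInf_le hUbdd ⟨hv, hsv⟩) hv.2
    have hsub1 : Set.Ioc a₀ β ⊆ {u : ℝ | s < ψ u} ∩ Set.Ioc α β := by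
      rintro u ⟨hu1, hu2⟩
      obtain ⟨x, hxU, hxu⟩ := exists_lt_of_csInf_lt hUne hu1
      exact ⟨lt_of_lt_of_le hxU.2 (hψ hxu.le), lt_of_le_of_lt ha₀α hu1, hu2⟩
    have hsub2 : {u : ℝ | s < ψ u} ∩ Set.Ioc α β ⊆ Set.Icc a₀ β := by
      rintro u ⟨hu1, hu2⟩
      exact ⟨csInf_le hUbdd ⟨⟨hu2.1.le, hu2.2⟩, hu1⟩, hu2.2⟩
    have haeeq : ({u : ℝ | s < ψ u} ∩ Set.Ioc α β : Set ℝ) =ᵐ[volume] Set.Ioc a₀ β := by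
      rw [MeasureTheory.ae_eq_set]
      constructor
      · refine measure_mono_null (fun u hu => ?_) (Real.volume_singleton (a := a₀))
        have h4 := hsub2 hu.1
        have h5 : ¬ (a₀ < u ∧ u ≤ β) := hu.2
        have : u = a₀ := by
          rcases lt_or_eq_of_le h4.1 with h | h
          · exact absurd ⟨h, h4.2⟩ h5
          · exact h.symm
        exact this
      · exact measure_mono_null (fun u hu => absurd (hsub1 hu.1) hu.2) measure_empty
    rw [setIntegral_congr_set haeeq]
    have := htail a₀ ⟨ha₀α, ha₀β⟩
    rwa [intervalIntegral.integral_of_le ha₀β] at this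
  · have hempty : {u : ℝ | s < ψ u} ∩ Set.Ioc α β = ∅ := by
      ext u
      simp only [Set.mem_inter_iff, Set.mem_setOf_eq, Set.mem_Ioc, Set.mem_empty_iff_false,
        iff_false]
      rintro ⟨h1, h2, h3'⟩
      exact hne ⟨u, ⟨h2.le, h3'⟩, h1⟩
    rw [hempty]
    simp

lemma key_right {α β C D : ℝ} (hαβ : α ≤ β) {ρ ψ : ℝ → ℝ}
    (hρm : Measurable ρ) (hρD : ∀ x, |ρ x| ≤ D)
    (hψ : Antitone ψ) (hψ0 : ∀ t, 0 ≤ ψ t) (hψC : ∀ t, ψ t ≤ C)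
    (hhead : ∀ t ∈ Set.Icc α β, 0 ≤ ∫ u in α..t, ρ u) :
    0 ≤ ∫ u in α..β, ψ u * ρ u := by
  have h := key_left (C := C) (D := D) (ρ := fun u => ρ (α + β - u))
      (ψ := fun u => ψ (α + β - u)) hαβ
      (hρm.comp (measurable_const.sub measurable_id))
      (fun x => hρD _)
      (fun u v huv => hψ (by linarith))
      (fun t => hψ0 _) (fun t => hψC _)
      (fun t ht => by
        have h1 := intervalIntegral.integral_comp_sub_left (a := t) (b := β) ρ (α + β)
        have h2 : α + β - β = α := by ring
        rw [h2] at h1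
        rw [h1]
        exact hhead (α + β - t) ⟨by linarith [ht.2], by linarith [ht.1]⟩)
  have h3 := intervalIntegral.integral_comp_sub_left (a := α) (b := β)
      (fun u => ψ u * ρ u) (α + β)
  have h4 : α + β - β = α := by ring
  have h5 : α + β - α = β := by ring
  rw [h4, h5] at h3
  rw [← h3]
  exact h

theorem stmt19 (τ l M : ℝ) (f w lamh : ℝ → ℝ)
    (h0l : 0 ≤ l) (hlM : l ≤ M) (hMτ : M ≤ τ)
    (hf : ContinuousOn f (Set.Icc 0 τ)) (hw : ContinuousOn w (Set.Icc 0 τ))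
    (hwpos : ∀ x ∈ Set.Icc (0:ℝ) τ, 0 < w x)
    (hfmono : MonotoneOn f (Set.Icc l M))
    (htan1 : ∀ t ∈ Set.Icc (0:ℝ) l,
      (∫ u in (0:ℝ)..l, f u * w u) +
        ((∫ u in (0:ℝ)..t, w u) - ∫ u in (0:ℝ)..l, w u) * f l ≤
        ∫ u in (0:ℝ)..t, f u * w u)
    (htan2 : ∀ t ∈ Set.Icc M τ,
      (∫ u in (0:ℝ)..M, f u * w u) +
        ((∫ u in (0:ℝ)..t, w u) - ∫ u in (0:ℝ)..M, w u) * f M ≤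
        ∫ u in (0:ℝ)..t, f u * w u)
    (hmono : MonotoneOn lamh (Set.Icc 0 τ))
    (hmin : ∀ g : ℝ → ℝ, MonotoneOn g (Set.Icc 0 τ) →
      (∫ x in (0:ℝ)..τ, (lamh x - f x) ^ 2 * w x) ≤
        ∫ x in (0:ℝ)..τ, (g x - f x) ^ 2 * w x) :
    ∀ᵐ t ∂(volume.restrict (Set.Icc l M)), lamh t = f t := by
  have hlτ : l ≤ τ := hlM.trans hMτ
  have h0M : (0:ℝ) ≤ M := h0l.trans hlM
  have h0τ : (0:ℝ) ≤ τ := h0M.trans hMτ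
  -- clamped versions
  set c : ℝ → ℝ := fun t => max 0 (min t τ) with hc
  have hcmem : ∀ t, c t ∈ Set.Icc 0 τ :=
    fun t => ⟨le_max_left _ _, max_le h0τ (min_le_right _ _)⟩
  have hcid : ∀ t ∈ Set.Icc 0 τ, c t = t := by
    intro t ht
    simp only [hc]
    rw [min_eq_left ht.2, max_eq_right ht.1]
  have hcmono : Monotone c := fun a b hab => max_le_max le_rfl (min_le_min hab le_rfl)
  have hccont : Continuous c := continuous_const.max (continuous_id.min continuous_const)
  set F : ℝ → ℝ := fun t => f (c t) with hFdef
  set Wf : ℝ → ℝ := fun t => w (c t) with hWdef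
  set L : ℝ → ℝ := fun t => lamh (c t) with hLdef
  have hFeq : ∀ t ∈ Set.Icc 0 τ, F t = f t := fun t ht => congrArg f (hcid t ht)
  have hWeq : ∀ t ∈ Set.Icc 0 τ, Wf t = w t := fun t ht => congrArg w (hcid t ht)
  have hLeq : ∀ t ∈ Set.Icc 0 τ, L t = lamh t := fun t ht => congrArg lamh (hcid t ht)
  have hFcont : Continuous F := hf.comp_continuous hccont hcmem
  have hWcont : Continuous Wf := hw.comp_continuous hccont hcmem
  have hLmono : Monotone L := fun a b hab => hmono (hcmem a) (hcmem b) (hcmono hab)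
  have hFm : Measurable F := hFcont.measurable
  have hWm : Measurable Wf := hWcont.measurable
  have hLm : Measurable L := hLmono.measurable
  have hWpos : ∀ t, 0 < Wf t := fun t => hwpos _ (hcmem t)
  -- bounds
  obtain ⟨Cf, hCf⟩ := isCompact_Icc.exists_bound_of_continuousOn hf
  obtain ⟨Cw, hCw⟩ := isCompact_Icc.exists_bound_of_continuousOn hw
  have hFb : ∀ t, |F t| ≤ Cf := fun t => by
    have := hCf _ (hcmem t); rwa [Real.norm_eq_abs] at this
  have hWb : ∀ t, |Wf t| ≤ Cw := fun t => by
    have := hCw _ (hcmem t); rwa [Real.norm_eq_abs] at this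
  set CL : ℝ := max |lamh 0| |lamh τ| with hCL
  have hLb : ∀ t, |L t| ≤ CL := by
    intro t
    rw [abs_le]
    constructor
    · have h1 : lamh 0 ≤ L t := hmono ⟨le_rfl, h0τ⟩ (hcmem t) (hcmem t).1
      have h2 : -|lamh 0| ≤ lamh 0 := neg_abs_le _
      have h3 : |lamh 0| ≤ CL := le_max_left _ _
      linarith
    · have h1 : L t ≤ lamh τ := hmono (hcmem t) ⟨h0τ, le_rfl⟩ (hcmem t).2
      have h2 : lamh τ ≤ |lamh τ| := le_abs_self _
      have h3 : |lamh τ| ≤ CL := le_max_right _ _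
      linarith
  have hCf0 : 0 ≤ Cf := (abs_nonneg _).trans (hFb 0)
  have hCL0 : 0 ≤ CL := (abs_nonneg _).trans (hLb 0)
  have hCw0 : 0 ≤ Cw := (abs_nonneg _).trans (hWb 0)
  -- F monotone on [l,M]
  have hFlM : ∀ ⦃s t : ℝ⦄, l ≤ s → s ≤ t → t ≤ M → F s ≤ F t := by
    intro s t h1 h2 h3
    rw [hFeq s ⟨h0l.trans h1, (h2.trans h3).trans hMτ⟩,
        hFeq t ⟨h0l.trans (h1.trans h2), h3.trans hMτ⟩]
    exact hfmono ⟨h1, h2.trans h3⟩ ⟨h1.trans h2, h3⟩ h2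
  -- the competitor
  set gs : ℝ → ℝ := fun t => if t < l then min (L t) (F l) else if t ≤ M then F t
    else max (L t) (F M) with hgs
  have hgmono : Monotone gs := by
    intro s t hst
    simp only [hgs]
    by_cases hs1 : s < l
    · rw [if_pos hs1]
      by_cases ht1 : t < l
      · rw [if_pos ht1]
        exact min_le_min (hLmono hst) le_rfl
      · rw [if_neg ht1]
        push_neg at ht1
        by_cases ht2 : t ≤ M
        · rw [if_pos ht2]
          exact (min_le_right _ _).trans (hFlM le_rfl ht1 ht2)
        · rw [if_neg ht2]
          exact (min_le_right _ _).trans ((hFlM le_rfl hlM le_rfl).trans (le_max_right _ _))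
    · rw [if_neg hs1]
      push_neg at hs1
      have ht1 : ¬ t < l := not_lt.mpr (hs1.trans hst)
      rw [if_neg ht1]
      push_neg at ht1
      by_cases hs2 : s ≤ M
      · rw [if_pos hs2]
        by_cases ht2 : t ≤ M
        · rw [if_pos ht2]
          exact hFlM hs1 hst ht2
        · rw [if_neg ht2]
          exact (hFlM hs1 hs2 le_rfl).trans (le_max_right _ _)
      · rw [if_neg hs2]
        have ht2 : ¬ t ≤ M := fun h => hs2 (hst.trans h)
        rw [if_neg ht2]
        exact max_le_max (hLmono hst) le_rfl
  have hgm : Measurable gs := hgmono.measurable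
  set Cg : ℝ := max CL Cf with hCg
  have hgb : ∀ t, |gs t| ≤ Cg := by
    intro t
    have hL' := abs_le.mp (hLb t)
    have hFl' := abs_le.mp (hFb l)
    have hFt' := abs_le.mp (hFb t)
    have hFM' := abs_le.mp (hFb M)
    have h1 : CL ≤ Cg := le_max_left _ _
    have h2 : Cf ≤ Cg := le_max_right _ _
    simp only [hgs]
    split_ifs
    · rw [abs_le]
      constructor
      · refine le_min (by linarith) (by linarith)
      · exact (min_le_left _ _).trans (by linarith)
    · rw [abs_le]; exact ⟨by linarith, by linarith⟩
    · rw [abs_le]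
      constructor
      · exact le_trans (by linarith : -Cg ≤ L t) (le_max_left _ _)
      · exact max_le (by linarith) (by linarith)
  -- the three quadratic integrands
  set Pf : ℝ → ℝ := fun t => (L t - F t) ^ 2 * Wf t with hPf
  set Qf : ℝ → ℝ := fun t => (L t - F t) * (gs t - L t) * Wf t with hQf
  set Rf : ℝ → ℝ := fun t => (gs t - L t) ^ 2 * Wf t with hRf
  have hPm : Measurable Pf := (((hLm.sub hFm).pow_const 2).mul hWm)
  have hQm : Measurable Qf := (((hLm.sub hFm).mul (hgm.sub hLm)).mul hWm)
  have hRm : Measurable Rf := (((hgm.sub hLm).pow_const 2).mul hWm)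
  have habs_sub : ∀ a b : ℝ, ∀ A B : ℝ, |a| ≤ A → |b| ≤ B → |a - b| ≤ A + B := by
    intro a b A B ha hb
    have h1 := abs_le.mp ha
    have h2 := abs_le.mp hb
    rw [abs_le]
    exact ⟨by linarith, by linarith⟩
  have hPb : ∀ t, |Pf t| ≤ (CL + Cf) * (CL + Cf) * Cw := by
    intro t
    simp only [hPf, sq]
    have h := habs_sub (L t) (F t) CL Cf (hLb t) (hFb t)
    exact abs_mul3_le h h (hWb t)
  have hQb : ∀ t, |Qf t| ≤ (CL + Cf) * (Cg + CL) * Cw := fun t =>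
    abs_mul3_le (habs_sub _ _ _ _ (hLb t) (hFb t)) (habs_sub _ _ _ _ (hgb t) (hLb t)) (hWb t)
  have hRb : ∀ t, |Rf t| ≤ (Cg + CL) * (Cg + CL) * Cw := by
    intro t
    simp only [hRf, sq]
    have h := habs_sub (gs t) (L t) Cg CL (hgb t) (hLb t)
    exact abs_mul3_le h h (hWb t)
  have hPi : ∀ a b : ℝ, IntervalIntegrable Pf volume a b := fun a b => bdd_meas_intInt hPm hPb
  have hQi : ∀ a b : ℝ, IntervalIntegrable Qf volume a b := fun a b => bdd_meas_intInt hQm hQb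
  have hRi : ∀ a b : ℝ, IntervalIntegrable Rf volume a b := fun a b => bdd_meas_intInt hRm hRb
  -- congruence helper
  have hcongr : ∀ (g g' : ℝ → ℝ) (a b : ℝ), 0 ≤ a → b ≤ τ → a ≤ b →
      (∀ u ∈ Set.Icc 0 τ, g u = g' u) → (∫ u in a..b, g u) = ∫ u in a..b, g' u := by
    intro g g' a b ha hb hab h
    refine intervalIntegral.integral_congr fun u hu => ?_
    rw [Set.uIcc_of_le hab] at hu
    exact h u ⟨ha.trans hu.1, hu.2.trans hb⟩
  set J : ℝ := ∫ t in (0:ℝ)..τ, Qf t with hJdef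
  set K : ℝ := ∫ t in (0:ℝ)..τ, Rf t with hKdef
  have hK0 : 0 ≤ K :=
    intervalIntegral.integral_nonneg h0τ fun u _ => mul_nonneg (sq_nonneg _) (hWpos u).le
  -- variational inequality
  have hJ0 : 0 ≤ J := by
    by_contra hJneg
    push_neg at hJneg
    set ε : ℝ := min 1 (-J / (K + 1)) with hε
    have hε0 : 0 < ε := lt_min one_pos (div_pos (neg_pos.2 hJneg) (by linarith))
    have hε1 : ε ≤ 1 := min_le_left _ _
    have hεK : ε * K ≤ -J := by
      have h1 : ε ≤ -J / (K + 1) := min_le_right _ _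
      have h2 : ε * K ≤ (-J / (K + 1)) * K := mul_le_mul_of_nonneg_right h1 hK0
      have h3 : (-J / (K + 1)) * K ≤ -J := by
        rw [div_mul_eq_mul_div, div_le_iff₀ (by linarith : (0:ℝ) < K + 1)]
        nlinarith
      linarith
    have hmonoε : MonotoneOn (fun t => L t + ε * (gs t - L t)) (Set.Icc 0 τ) := by
      intro a _ b _ hab
      have h1 := hLmono hab
      have h2 := hgmono hab
      simp only
      nlinarith
    have h := hmin _ hmonoε
    have hLHS : (∫ x in (0:ℝ)..τ, (lamh x - f x) ^ 2 * w x) = ∫ t in (0:ℝ)..τ, Pf t := by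
      refine (hcongr _ _ 0 τ le_rfl le_rfl h0τ fun u hu => ?_).symm
      simp only [hPf]
      rw [hFeq u hu, hWeq u hu, hLeq u hu]
    have hRHS : (∫ x in (0:ℝ)..τ, ((fun t => L t + ε * (gs t - L t)) x - f x) ^ 2 * w x)
        = (∫ t in (0:ℝ)..τ, Pf t) + ε * (2 * J) + ε ^ 2 * K := by
      have hstep : (∫ x in (0:ℝ)..τ, ((fun t => L t + ε * (gs t - L t)) x - f x) ^ 2 * w x)
          = ∫ t in (0:ℝ)..τ, (Pf t + (ε * (2 * Qf t) + ε ^ 2 * Rf t)) := by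
        refine hcongr _ _ 0 τ le_rfl le_rfl h0τ fun u hu => ?_
        simp only [hPf, hQf, hRf]
        rw [hFeq u hu, hWeq u hu, hLeq u hu]
        ring
      rw [hstep]
      rw [intervalIntegral.integral_add (hPi 0 τ)
        (((hQi 0 τ).const_mul 2).const_mul ε |>.add ((hRi 0 τ).const_mul (ε ^ 2)))]
      rw [intervalIntegral.integral_add (((hQi 0 τ).const_mul 2).const_mul ε)
        ((hRi 0 τ).const_mul (ε ^ 2))]
      rw [intervalIntegral.integral_const_mul, intervalIntegral.integral_const_mul,
        intervalIntegral.integral_const_mul]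
      rw [← hJdef, ← hKdef]
      ring
    rw [hLHS, hRHS] at h
    have h4 : 0 ≤ ε * (2 * J) + ε ^ 2 * K := by linarith
    have h5 : 0 ≤ 2 * J + ε * K := by
      have h6 : ε * (2 * J) + ε ^ 2 * K = ε * (2 * J + ε * K) := by ring
      rw [h6] at h4
      exact nonneg_of_mul_nonneg_right h4 hε0
    linarith
  -- split J into three pieces
  have hsplit : J = (∫ t in (0:ℝ)..l, Qf t) + (∫ t in l..M, Qf t) + ∫ t in M..τ, Qf t := by
    rw [hJdef]
    rw [← intervalIntegral.integral_add_adjacent_intervals (hQi 0 M) (hQi M τ)]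
    rw [← intervalIntegral.integral_add_adjacent_intervals (hQi 0 l) (hQi l M)]
  -- middle piece
  have hmid : (∫ t in l..M, Qf t) = -∫ t in l..M, Pf t := by
    rw [← intervalIntegral.integral_neg]
    refine intervalIntegral.integral_congr fun t ht => ?_
    rw [Set.uIcc_of_le hlM] at ht
    have h1 : ¬ t < l := not_lt.mpr ht.1
    simp only [hQf, hPf, hgs, if_neg h1, if_pos ht.2]
    ring
  -- a.e.-ne facts
  have hae_ne : ∀ p : ℝ, ∀ᵐ x : ℝ, x ≠ p := by
    intro p
    rw [ae_iff]
    have : {x : ℝ | ¬ x ≠ p} = {p} := by ext x; simp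
    rw [this]
    exact Real.volume_singleton
  -- left piece
  set ψl : ℝ → ℝ := fun t => max (L t - F l) 0 with hψl
  have hψlmono : Monotone ψl := fun a b hab =>
    max_le_max (sub_le_sub_right (hLmono hab) _) le_rfl
  have hxmax : ∀ x : ℝ, x * max x 0 = (max x 0) ^ 2 := by
    intro x
    rcases le_or_gt x 0 with h | h
    · rw [max_eq_right h]; ring
    · rw [max_eq_left h.le]; ring
  have hleft : (∫ t in (0:ℝ)..l, Qf t) = -∫ t in (0:ℝ)..l, ψl t * ((L t - F t) * Wf t) := by
    rw [← intervalIntegral.integral_neg]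
    refine intervalIntegral.integral_congr_ae ?_
    filter_upwards [hae_ne l] with t htne htmem
    rw [Set.uIoc_of_le h0l] at htmem
    have htl : t < l := lt_of_le_of_ne htmem.2 htne
    simp only [hQf, hgs, if_pos htl, hψl]
    have hminmax : min (L t) (F l) - L t = -max (L t - F l) 0 := by
      rcases le_or_gt (L t) (F l) with h | h
      · rw [min_eq_left h, max_eq_right (by linarith)]; ring
      · rw [min_eq_right h.le, max_eq_left (by linarith)]; ring
    rw [hminmax]
    ring
  have hU1 : 0 ≤ ∫ t in (0:ℝ)..l, ψl t * ((L t - F t) * Wf t) := by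
    have hdecomp : ∀ t, ψl t * ((L t - F t) * Wf t)
        = (ψl t) ^ 2 * Wf t + ψl t * ((F l - F t) * Wf t) := by
      intro t
      have h := hxmax (L t - F l)
      simp only [hψl]
      linear_combination Wf t * h
    have hψlm : Measurable ψl := (hLm.sub measurable_const).max measurable_const
    have hψlb : ∀ t, |ψl t| ≤ CL + Cf := by
      intro t
      simp only [hψl]
      rw [abs_le]
      constructor
      · exact le_trans (by linarith) (le_max_right _ _)
      · refine max_le ?_ (by linarith)
        have h1 := abs_le.mp (hLb t)
        have h2 := abs_le.mp (hFb l)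
        linarith
    have hψl0 : ∀ t, 0 ≤ ψl t := fun t => le_max_right _ _
    have hρm : Measurable (fun u => (F l - F u) * Wf u) :=
      (measurable_const.sub hFm).mul hWm
    have hρb : ∀ u, |(F l - F u) * Wf u| ≤ (Cf + Cf) * Cw := by
      intro u
      rw [abs_mul]
      exact mul_le_mul (habs_sub _ _ _ _ (hFb l) (hFb u)) (hWb u) (abs_nonneg _)
        (by linarith)
    have h1 : IntervalIntegrable (fun t => (ψl t) ^ 2 * Wf t) volume 0 l :=
      bdd_meas_intInt ((hψlm.pow_const 2).mul hWm) (fun t => by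
        rw [sq]
        exact abs_mul3_le (hψlb t) (hψlb t) (hWb t))
    have h2 : IntervalIntegrable (fun t => ψl t * ((F l - F t) * Wf t)) volume 0 l :=
      bdd_meas_intInt (hψlm.mul hρm) (fun t => by
        rw [abs_mul]
        exact mul_le_mul (hψlb t) (hρb t) (abs_nonneg _) (by linarith))
    calc (0:ℝ) ≤ (∫ t in (0:ℝ)..l, (ψl t) ^ 2 * Wf t)
          + ∫ t in (0:ℝ)..l, ψl t * ((F l - F t) * Wf t) := by
          have ha : 0 ≤ ∫ t in (0:ℝ)..l, (ψl t) ^ 2 * Wf t :=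
            intervalIntegral.integral_nonneg h0l fun u _ =>
              mul_nonneg (sq_nonneg _) (hWpos u).le
          have hb : 0 ≤ ∫ t in (0:ℝ)..l, ψl t * ((F l - F t) * Wf t) := by
            refine key_left (C := CL + Cf) (D := (Cf + Cf) * Cw) h0l hρm hρb hψlmono
              hψl0 (fun t => (le_abs_self _).trans (hψlb t)) ?_
            -- tail condition from htan1
            intro t ht
            have hwint : ∀ s : ℝ, s ∈ Set.Icc (0:ℝ) τ →
                (∫ u in (0:ℝ)..s, w u) = ∫ u in (0:ℝ)..s, Wf u := fun s hs =>
              hcongr _ _ 0 s le_rfl hs.2 hs.1 fun u hu => (hWeq u hu).symm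
            have hfwint : ∀ s : ℝ, s ∈ Set.Icc (0:ℝ) τ →
                (∫ u in (0:ℝ)..s, f u * w u) = ∫ u in (0:ℝ)..s, F u * Wf u := fun s hs =>
              hcongr _ _ 0 s le_rfl hs.2 hs.1 fun u hu => by rw [hFeq u hu, hWeq u hu]
            have htl : t ∈ Set.Icc (0:ℝ) τ := ⟨ht.1, ht.2.trans hlτ⟩
            have hll : l ∈ Set.Icc (0:ℝ) τ := ⟨h0l, hlτ⟩
            have h3 := htan1 t ht
            rw [hwint t htl, hwint l hll, hfwint t htl, hfwint l hll] at h3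
            have hWi : ∀ a b : ℝ, IntervalIntegrable Wf volume a b :=
              fun a b => hWcont.intervalIntegrable a b
            have hFWi : ∀ a b : ℝ, IntervalIntegrable (fun u => F u * Wf u) volume a b :=
              fun a b => (hFcont.mul hWcont).intervalIntegrable a b
            have hsub1 : (∫ u in t..l, Wf u)
                = (∫ u in (0:ℝ)..l, Wf u) - ∫ u in (0:ℝ)..t, Wf u :=
              (intervalIntegral.integral_interval_sub_left (hWi 0 l) (hWi 0 t)).symm
            have hsub2 : (∫ u in t..l, F u * Wf u)
                = (∫ u in (0:ℝ)..l, F u * Wf u) - ∫ u in (0:ℝ)..t, F u * Wf u :=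
              (intervalIntegral.integral_interval_sub_left (hFWi 0 l) (hFWi 0 t)).symm
            have hexpand : (∫ u in t..l, (F l - F u) * Wf u)
                = F l * (∫ u in t..l, Wf u) - ∫ u in t..l, F u * Wf u := by
              rw [← intervalIntegral.integral_const_mul]
              rw [← intervalIntegral.integral_sub ((hWi t l).const_mul (F l)) (hFWi t l)]
              refine intervalIntegral.integral_congr fun u _ => ?_
              ring
            rw [hexpand, hsub1, hsub2]
            have hFl : F l = f l := hFeq l hll
            rw [hFl]
            linarith
          linarith
      _ = ∫ t in (0:ℝ)..l, ψl t * ((L t - F t) * Wf t) := by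
          rw [← intervalIntegral.integral_add h1 h2]
          refine intervalIntegral.integral_congr fun t _ => ?_
          rw [hdecomp t]
  -- right piece
  set ψr : ℝ → ℝ := fun t => max (F M - L t) 0 with hψr
  have hψrmono : Antitone ψr := fun a b hab =>
    max_le_max (sub_le_sub_left (hLmono hab) _) le_rfl
  have hright : (∫ t in M..τ, Qf t) = -∫ t in M..τ, ψr t * ((F t - L t) * Wf t) := by
    rw [← intervalIntegral.integral_neg]
    refine intervalIntegral.integral_congr_ae ?_
    filter_upwards [hae_ne M] with t htne htmem
    rw [Set.uIoc_of_le hMτ] at htmem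
    have htM : M < t := htmem.1
    have h1 : ¬ t < l := not_lt.mpr (hlM.trans htM.le)
    have h2 : ¬ t ≤ M := not_le.mpr htM
    simp only [hQf, hgs, if_neg h1, if_neg h2, hψr]
    have hminmax : max (L t) (F M) - L t = max (F M - L t) 0 := by
      rcases le_or_gt (L t) (F M) with h | h
      · rw [max_eq_right h, max_eq_left (by linarith)]
      · rw [max_eq_left h.le, max_eq_right (by linarith)]
        ring
    rw [hminmax]
    ring
  have hU3 : 0 ≤ ∫ t in M..τ, ψr t * ((F t - L t) * Wf t) := by
    have hψrm : Measurable ψr := (measurable_const.sub hLm).max measurable_const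
    have hψrb : ∀ t, |ψr t| ≤ Cf + CL := by
      intro t
      simp only [hψr]
      rw [abs_le]
      constructor
      · exact le_trans (by linarith) (le_max_right _ _)
      · refine max_le ?_ (by linarith)
        have h1 := abs_le.mp (hLb t)
        have h2 := abs_le.mp (hFb M)
        linarith
    have hψr0 : ∀ t, 0 ≤ ψr t := fun t => le_max_right _ _
    have hρm : Measurable (fun u => (F u - F M) * Wf u) :=
      (hFm.sub measurable_const).mul hWm
    have hρb : ∀ u, |(F u - F M) * Wf u| ≤ (Cf + Cf) * Cw := by
      intro u
      rw [abs_mul]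
      exact mul_le_mul (habs_sub _ _ _ _ (hFb u) (hFb M)) (hWb u) (abs_nonneg _)
        (by linarith)
    have hdecomp : ∀ t, ψr t * ((F t - L t) * Wf t)
        = (ψr t) ^ 2 * Wf t + ψr t * ((F t - F M) * Wf t) := by
      intro t
      have h := hxmax (F M - L t)
      simp only [hψr]
      linear_combination Wf t * h
    have h1 : IntervalIntegrable (fun t => (ψr t) ^ 2 * Wf t) volume M τ :=
      bdd_meas_intInt ((hψrm.pow_const 2).mul hWm) (fun t => by
        rw [sq]
        exact abs_mul3_le (hψrb t) (hψrb t) (hWb t))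
    have h2 : IntervalIntegrable (fun t => ψr t * ((F t - F M) * Wf t)) volume M τ :=
      bdd_meas_intInt (hψrm.mul hρm) (fun t => by
        rw [abs_mul]
        exact mul_le_mul (hψrb t) (hρb t) (abs_nonneg _) (by linarith))
    calc (0:ℝ) ≤ (∫ t in M..τ, (ψr t) ^ 2 * Wf t)
          + ∫ t in M..τ, ψr t * ((F t - F M) * Wf t) := by
          have ha : 0 ≤ ∫ t in M..τ, (ψr t) ^ 2 * Wf t :=
            intervalIntegral.integral_nonneg hMτ fun u _ =>
              mul_nonneg (sq_nonneg _) (hWpos u).le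
          have hb : 0 ≤ ∫ t in M..τ, ψr t * ((F t - F M) * Wf t) := by
            refine key_right (C := Cf + CL) (D := (Cf + Cf) * Cw) hMτ hρm hρb hψrmono
              hψr0 (fun t => (le_abs_self _).trans (hψrb t)) ?_
            intro t ht
            have hwint : ∀ s : ℝ, s ∈ Set.Icc (0:ℝ) τ →
                (∫ u in (0:ℝ)..s, w u) = ∫ u in (0:ℝ)..s, Wf u := fun s hs =>
              hcongr _ _ 0 s le_rfl hs.2 hs.1 fun u hu => (hWeq u hu).symm
            have hfwint : ∀ s : ℝ, s ∈ Set.Icc (0:ℝ) τ →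
                (∫ u in (0:ℝ)..s, f u * w u) = ∫ u in (0:ℝ)..s, F u * Wf u := fun s hs =>
              hcongr _ _ 0 s le_rfl hs.2 hs.1 fun u hu => by rw [hFeq u hu, hWeq u hu]
            have htl : t ∈ Set.Icc (0:ℝ) τ := ⟨h0M.trans ht.1, ht.2⟩
            have hMM : M ∈ Set.Icc (0:ℝ) τ := ⟨h0M, hMτ⟩
            have h3 := htan2 t ht
            rw [hwint t htl, hwint M hMM, hfwint t htl, hfwint M hMM] at h3
            have hWi : ∀ a b : ℝ, IntervalIntegrable Wf volume a b :=
              fun a b => hWcont.intervalIntegrable a b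
            have hFWi : ∀ a b : ℝ, IntervalIntegrable (fun u => F u * Wf u) volume a b :=
              fun a b => (hFcont.mul hWcont).intervalIntegrable a b
            have hsub1 : (∫ u in M..t, Wf u)
                = (∫ u in (0:ℝ)..t, Wf u) - ∫ u in (0:ℝ)..M, Wf u :=
              (intervalIntegral.integral_interval_sub_left (hWi 0 t) (hWi 0 M)).symm
            have hsub2 : (∫ u in M..t, F u * Wf u)
                = (∫ u in (0:ℝ)..t, F u * Wf u) - ∫ u in (0:ℝ)..M, F u * Wf u :=
              (intervalIntegral.integral_interval_sub_left (hFWi 0 t) (hFWi 0 M)).symm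
            have hexpand : (∫ u in M..t, (F u - F M) * Wf u)
                = (∫ u in M..t, F u * Wf u) - F M * ∫ u in M..t, Wf u := by
              rw [← intervalIntegral.integral_const_mul]
              rw [← intervalIntegral.integral_sub (hFWi M t) ((hWi M t).const_mul (F M))]
              refine intervalIntegral.integral_congr fun u _ => ?_
              ring
            rw [hexpand, hsub1, hsub2]
            have hFM : F M = f M := hFeq M hMM
            rw [hFM]
            linarith
          linarith
      _ = ∫ t in M..τ, ψr t * ((F t - L t) * Wf t) := by
          rw [← intervalIntegral.integral_add h1 h2]
          refine intervalIntegral.integral_congr fun t _ => ?_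
          rw [hdecomp t]
  -- conclude middle integral is zero
  have hI2nonneg : 0 ≤ ∫ t in l..M, Pf t :=
    intervalIntegral.integral_nonneg hlM fun u _ => mul_nonneg (sq_nonneg _) (hWpos u).le
  have hI2zero : (∫ t in l..M, Pf t) = 0 := by
    rw [hsplit, hmid, hleft, hright] at hJ0
    linarith
  -- extract a.e. equality
  have hPz : ∀ᵐ t ∂(volume.restrict (Set.Ioc l M)), Pf t = 0 := by
    have hint : IntegrableOn Pf (Set.Ioc l M) := (hPi l M).1
    have hnn : 0 ≤ᵐ[volume.restrict (Set.Ioc l M)] Pf :=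
      Filter.Eventually.of_forall fun t => mul_nonneg (sq_nonneg _) (hWpos t).le
    have h0 : (∫ t in Set.Ioc l M, Pf t) = 0 := by
      rw [← intervalIntegral.integral_of_le hlM]
      exact hI2zero
    exact (integral_eq_zero_iff_of_nonneg_ae hnn hint).mp h0
  rw [← Measure.restrict_congr_set MeasureTheory.Ioc_ae_eq_Icc]
  filter_upwards [hPz, ae_restrict_mem measurableSet_Ioc] with t hzt htmem
  have htIcc : t ∈ Set.Icc 0 τ := ⟨h0l.trans htmem.1.le, htmem.2.trans hMτ⟩
  simp only [hPf] at hzt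
  rw [hFeq t htIcc, hWeq t htIcc, hLeq t htIcc] at hzt
  have hwt : w t ≠ 0 := (hwpos t htIcc).ne'
  have h1 : (lamh t - f t) ^ 2 = 0 := by
    rcases mul_eq_zero.mp hzt with h | h
    · exact h
    · exact absurd h hwt
  have h2 : lamh t - f t = 0 := by
    exact pow_eq_zero_iff (by norm_num) |>.mp h1
  linarith
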